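/- Let P be an n×n symmetric positive definite matrix, B ∈ ℝ^{m×n}, E = BP⁻¹Bᵀ, and X = P⁻¹ − P⁻¹BᵀE⁺BP⁻¹. Then the matrix P^{1/2}XP^{1/2} = I − P^{−1/2}BᵀE⁺BP^{−1/2} is a symmetric projection (idempotent). -/

import Mathlib

open Matrix

open scoped ComplexOrder in
/-- The square root of a positive semidefinite matrix, as defined in the older Mathlib
(removed from current Mathlib). -/
noncomputable def Matrix.PosSemidef.sqrt {n : Type*} [Fintype n] [DecidableEq n]
    {𝕜 : Type*} [RCLike 𝕜] {A : Matrix n n 𝕜} (hA : A.PosSemidef) : Matrix n n 𝕜 :=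
  hA.1.eigenvectorUnitary.1 * diagonal ((↑) ∘ (√·) ∘ hA.1.eigenvalues) *
    (star hA.1.eigenvectorUnitary : Matrix n n 𝕜)

/-- Uniqueness-style argument for Moore–Penrose inverses in a ring. -/
lemma mp_unique {M : Type*} [Ring M] (A X Y : M)
    (hX : X * A * X = X) (hY : Y * A * Y = Y)
    (hA1 : A * X * A = A) (hA2 : A * Y * A = A)
    (e1 : Y * A = A * X) (e2 : A * Y = X * A) : X = Y := by
  have hx : X = X * A * Y := by
    calc X = X * A * X := hX.symm
      _ = X * (Y * A) := by rw [mul_assoc, e1]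
      _ = X * (Y * (A * X * A)) := by rw [hA1]
      _ = X * ((Y * A) * (X * A)) := by simp only [mul_assoc]
      _ = X * ((A * X) * (A * Y)) := by rw [e1, e2]
      _ = (X * A * X) * (A * Y) := by simp only [mul_assoc]
      _ = X * (A * Y) := by rw [hX]
      _ = X * A * Y := by rw [mul_assoc]
  have hy : Y = X * A * Y := by
    calc Y = Y * A * Y := hY.symm
      _ = (A * X) * Y := by rw [e1]
      _ = ((A * Y * A) * X) * Y := by rw [hA2]
      _ = ((A * Y) * (A * X)) * Y := by simp only [mul_assoc]
      _ = ((X * A) * (Y * A)) * Y := by rw [e1, e2]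
      _ = (X * A) * (Y * A * Y) := by simp only [mul_assoc]
      _ = X * A * Y := by rw [hY]
  rw [hx, ← hy]

theorem sym_projection {m n : ℕ}
    (P : Matrix (Fin n) (Fin n) ℝ) (hP : P.PosDef)
    (B : Matrix (Fin m) (Fin n) ℝ)
    (E Ep : Matrix (Fin m) (Fin m) ℝ) (hE : E = B * P⁻¹ * Bᵀ)
    (h1 : E * Ep * E = E) (h2 : Ep * E * Ep = Ep)
    (h3 : (E * Ep)ᵀ = E * Ep) (h4 : (Ep * E)ᵀ = Ep * E)
    (X : Matrix (Fin n) (Fin n) ℝ)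
    (hX : X = P⁻¹ - P⁻¹ * Bᵀ * Ep * B * P⁻¹)
    (R : Matrix (Fin n) (Fin n) ℝ) (hR : R = hP.posSemidef.sqrt) :
    R * X * R = 1 - R⁻¹ * Bᵀ * Ep * B * R⁻¹ ∧
    (R * X * R)ᵀ = R * X * R ∧
    (R * X * R) * (R * X * R) = R * X * R := by
  -- basic facts about R
  have hRR : R * R = P := by
    rw [hR]
    have hU : (star hP.posSemidef.1.eigenvectorUnitary : Matrix (Fin n) (Fin n) ℝ) *
        hP.posSemidef.1.eigenvectorUnitary.1 = 1 := Unitary.coe_star_mul_self _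
    conv_rhs => rw [hP.posSemidef.1.spectral_theorem, Unitary.conjStarAlgAut_apply]
    simp only [Matrix.PosSemidef.sqrt, Matrix.mul_assoc]
    rw [← Matrix.mul_assoc (star (hP.posSemidef.1.eigenvectorUnitary : Matrix (Fin n) (Fin n) ℝ)),
      hU, Matrix.one_mul, ← Matrix.mul_assoc (diagonal _) (diagonal _), diagonal_mul_diagonal]
    have hd : (fun i => ((RCLike.ofReal ∘ (fun x => √x) ∘ hP.posSemidef.1.eigenvalues) i : ℝ) *
        (RCLike.ofReal ∘ (fun x => √x) ∘ hP.posSemidef.1.eigenvalues) i) =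
        (RCLike.ofReal ∘ hP.posSemidef.1.eigenvalues) := by
      funext i
      simp [Real.mul_self_sqrt (hP.posSemidef.eigenvalues_nonneg i)]
    rw [hd]
  have hRsym : Rᵀ = R := by
    rw [hR, ← conjTranspose_eq_transpose_of_trivial]
    simp [Matrix.PosSemidef.sqrt, Matrix.star_eq_conjTranspose, Matrix.mul_assoc]
  have hdet : IsUnit R.det := by
    have hPdet : P.det ≠ 0 := ne_of_gt hP.det_pos
    have : R.det * R.det = P.det := by rw [← det_mul, hRR]
    refine isUnit_iff_ne_zero.2 fun h => hPdet ?_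
    rw [← this, h, mul_zero]
  have hRiR : R⁻¹ * R = 1 := nonsing_inv_mul R hdet
  have hRRi : R * R⁻¹ = 1 := mul_nonsing_inv R hdet
  have hPinv : P⁻¹ = R⁻¹ * R⁻¹ := by rw [← hRR, Matrix.mul_inv_rev]
  have hRisym : (R⁻¹)ᵀ = R⁻¹ := by rw [transpose_nonsing_inv, hRsym]
  have hPinvsym : (P⁻¹)ᵀ = P⁻¹ := by rw [hPinv, transpose_mul, hRisym]
  -- E is symmetric
  have hEsym : Eᵀ = E := by
    rw [hE, transpose_mul, transpose_mul, transpose_transpose, hPinvsym,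
      ← Matrix.mul_assoc]
  -- Ep is symmetric (Moore–Penrose uniqueness)
  have eA : Epᵀ * E = E * Ep := by
    calc Epᵀ * E = Epᵀ * Eᵀ := by rw [hEsym]
      _ = (E * Ep)ᵀ := (transpose_mul E Ep).symm
      _ = E * Ep := h3
  have eB : E * Epᵀ = Ep * E := by
    calc E * Epᵀ = Eᵀ * Epᵀ := by rw [hEsym]
      _ = (Ep * E)ᵀ := (transpose_mul Ep E).symm
      _ = Ep * E := h4
  have t2 : Epᵀ * E * Epᵀ = Epᵀ := by
    have := congrArg Matrix.transpose h2
    simpa [transpose_mul, hEsym, Matrix.mul_assoc] using this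
  have t1 : E * Epᵀ * E = E := by
    have := congrArg Matrix.transpose h1
    simpa [transpose_mul, hEsym, Matrix.mul_assoc] using this
  have hEpsym : Epᵀ = Ep := (mp_unique E Ep Epᵀ h2 t2 h1 t1 eA eB).symm
  -- Goal 1
  have g1 : R * X * R = 1 - R⁻¹ * Bᵀ * Ep * B * R⁻¹ := by
    rw [hX, hPinv]
    have h5 : R * (R⁻¹ * R⁻¹) = R⁻¹ := by rw [← Matrix.mul_assoc, hRRi, one_mul]
    have h6 : R⁻¹ * R⁻¹ * R = R⁻¹ := by rw [Matrix.mul_assoc, hRiR, mul_one]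
    rw [Matrix.mul_sub, Matrix.sub_mul, h5, hRiR]
    congr 1
    calc R * (R⁻¹ * R⁻¹ * Bᵀ * Ep * B * (R⁻¹ * R⁻¹)) * R
        = (R * (R⁻¹ * R⁻¹)) * Bᵀ * Ep * B * (R⁻¹ * R⁻¹ * R) := by
          simp only [Matrix.mul_assoc]
      _ = R⁻¹ * Bᵀ * Ep * B * R⁻¹ := by rw [h5, h6]
  -- Goal 2 : symmetry
  have g2 : (R * X * R)ᵀ = R * X * R := by
    rw [g1]
    simp only [transpose_sub, transpose_one, transpose_mul, transpose_transpose,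
      hRisym, hEpsym]
    congr 1
    simp only [Matrix.mul_assoc]
  -- Goal 3 : idempotent
  have hQQ : (R⁻¹ * Bᵀ * Ep * B * R⁻¹) * (R⁻¹ * Bᵀ * Ep * B * R⁻¹)
      = R⁻¹ * Bᵀ * Ep * B * R⁻¹ := by
    calc (R⁻¹ * Bᵀ * Ep * B * R⁻¹) * (R⁻¹ * Bᵀ * Ep * B * R⁻¹)
        = R⁻¹ * Bᵀ * (Ep * (B * (R⁻¹ * R⁻¹) * Bᵀ) * Ep) * B * R⁻¹ := by
          simp only [Matrix.mul_assoc]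
      _ = R⁻¹ * Bᵀ * (Ep * E * Ep) * B * R⁻¹ := by rw [← hPinv, ← hE]
      _ = R⁻¹ * Bᵀ * Ep * B * R⁻¹ := by rw [h2]
  have g3 : (R * X * R) * (R * X * R) = R * X * R := by
    rw [g1]
    calc (1 - R⁻¹ * Bᵀ * Ep * B * R⁻¹) * (1 - R⁻¹ * Bᵀ * Ep * B * R⁻¹)
        = 1 - R⁻¹ * Bᵀ * Ep * B * R⁻¹ - R⁻¹ * Bᵀ * Ep * B * R⁻¹
          + (R⁻¹ * Bᵀ * Ep * B * R⁻¹) * (R⁻¹ * Bᵀ * Ep * B * R⁻¹) := by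
          noncomm_ring
      _ = 1 - R⁻¹ * Bᵀ * Ep * B * R⁻¹ := by rw [hQQ]; abel
  exact ⟨g1, g2, g3⟩
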